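/- Let F be an algebraically closed field and α₁ ∈ F nonzero. For any split octonion of the form (α, b; 0, 0) (i.e., with zero lower-left vector and zero lower-right scalar) and any positive integer k, there exists X ∈ O(F) such that (α, b; 0, 0) = (α₁, 0; 0, 0)·X^k. -/

import Mathlib

/-- Zorn vector matrices: the split octonion algebra over `F`. -/
structure Oct (F : Type*) where
  a : F              -- upper-left scalar η
  b : Fin 3 → F      -- upper-right vector x
  c : Fin 3 → F      -- lower-left vector y
  d : F              -- lower-right scalar ζ

namespace Oct

variable {F : Type*} [Field F]

/-- standard bilinear form on F^3 -/
def dot (x y : Fin 3 → F) : F := x 0 * y 0 + x 1 * y 1 + x 2 * y 2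

/-- cross product on F^3, satisfying ⟨x ∧ y, z⟩ = det(x,y,z) -/
def cross (x y : Fin 3 → F) : Fin 3 → F :=
  ![x 1 * y 2 - x 2 * y 1, x 2 * y 0 - x 0 * y 2, x 0 * y 1 - x 1 * y 0]

instance : Add (Oct F) :=
  ⟨fun A B => ⟨A.a + B.a, A.b + B.b, A.c + B.c, A.d + B.d⟩⟩

instance : Mul (Oct F) :=
  ⟨fun A B =>
    ⟨A.a * B.a + dot A.b B.c,
     A.a • B.b + B.d • A.b + cross A.c B.c,
     A.d • B.c + B.a • A.c + cross A.b B.b,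
     A.d * B.d + dot A.c B.b⟩⟩

instance : SMul F (Oct F) :=
  ⟨fun t A => ⟨t * A.a, t • A.b, t • A.c, t * A.d⟩⟩

instance : One (Oct F) := ⟨⟨1, 0, 0, 1⟩⟩

/-- powers, via A^{n+1} = A · A^n (well-defined by power-associativity) -/
def pow (A : Oct F) : ℕ → Oct F
  | 0 => 1
  | n + 1 => A * pow A n

/-- octonion conjugation -/
def conj (A : Oct F) : Oct F := ⟨A.d, -A.b, -A.c, A.a⟩

/-- the norm form -/
def norm (A : Oct F) : F := A.a * A.d - dot A.b A.c

end Oct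

open Oct

lemma Oct.mul_def {F : Type*} [Field F] (A B : Oct F) :
    A * B = ⟨A.a * B.a + dot A.b B.c,
     A.a • B.b + B.d • A.b + cross A.c B.c,
     A.d • B.c + B.a • A.c + cross A.b B.b,
     A.d * B.d + dot A.c B.b⟩ := rfl

lemma Oct.dot_zero_right {F : Type*} [Field F] (x : Fin 3 → F) : dot x 0 = 0 := by
  simp [dot]

lemma Oct.dot_zero_left {F : Type*} [Field F] (x : Fin 3 → F) : dot 0 x = 0 := by
  simp [dot]

lemma Oct.cross_zero_right {F : Type*} [Field F] (x : Fin 3 → F) : cross x 0 = 0 := by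
  funext i
  fin_cases i <;> simp [cross]

lemma Oct.cross_zero_left {F : Type*} [Field F] (x : Fin 3 → F) : cross 0 x = 0 := by
  funext i
  fin_cases i <;> simp [cross]

lemma Oct.cross_smul_self {F : Type*} [Field F] (x : Fin 3 → F) (t : F) :
    cross x (t • x) = 0 := by
  funext i
  fin_cases i <;> (simp [cross]; ring)

/-- powers of `⟨l, v, 0, 0⟩` -/
lemma Oct.powA {F : Type*} [Field F] (l : F) (v : Fin 3 → F) :
    ∀ n : ℕ, pow (⟨l, v, 0, 0⟩ : Oct F) (n + 1) = ⟨l ^ (n + 1), l ^ n • v, 0, 0⟩ := by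
  intro n
  induction n with
  | zero =>
    show (⟨l, v, 0, 0⟩ : Oct F) * (1 : Oct F) = _
    show (⟨l, v, 0, 0⟩ : Oct F) * (⟨1, 0, 0, 1⟩ : Oct F) = _
    rw [Oct.mul_def]
    simp [Oct.dot_zero_right, Oct.dot_zero_left, Oct.cross_zero_right, Oct.cross_zero_left]
  | succ m ih =>
    show (⟨l, v, 0, 0⟩ : Oct F) * pow (⟨l, v, 0, 0⟩ : Oct F) (m + 1) = _
    rw [ih, Oct.mul_def]
    simp only [Oct.dot_zero_right, Oct.dot_zero_left, Oct.cross_zero_right,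
      Oct.cross_zero_left, Oct.cross_smul_self]
    refine Oct.mk.injEq .. ▸ ⟨by ring, ?_, by simp, by simp [Oct.dot_zero_left]⟩
    funext i
    simp only [Pi.add_apply, Pi.smul_apply, Pi.zero_apply, smul_eq_mul]
    ring

/-- powers of `⟨0, v, 0, 1⟩` -/
lemma Oct.powB {F : Type*} [Field F] (v : Fin 3 → F) :
    ∀ n : ℕ, pow (⟨0, v, 0, 1⟩ : Oct F) (n + 1) = ⟨0, v, 0, 1⟩ := by
  intro n
  induction n with
  | zero =>
    show (⟨0, v, 0, 1⟩ : Oct F) * (⟨1, 0, 0, 1⟩ : Oct F) = _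
    rw [Oct.mul_def]
    simp [Oct.dot_zero_right, Oct.dot_zero_left, Oct.cross_zero_right, Oct.cross_zero_left]
  | succ m ih =>
    show (⟨0, v, 0, 1⟩ : Oct F) * pow (⟨0, v, 0, 1⟩ : Oct F) (m + 1) = _
    rw [ih, Oct.mul_def]
    have : cross v v = (0 : Fin 3 → F) := by
      have := Oct.cross_smul_self v (1 : F)
      simpa using this
    simp [Oct.dot_zero_right, Oct.dot_zero_left, Oct.cross_zero_right,
      Oct.cross_zero_left, this]

theorem stmt_5 {F : Type*} [Field F] [IsAlgClosed F] (α₁ : F) (hα₁ : α₁ ≠ 0)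
    (α : F) (b : Fin 3 → F) (k : ℕ) (hk : 1 ≤ k) :
    ∃ X : Oct F, (⟨α, b, 0, 0⟩ : Oct F) = (⟨α₁, 0, 0, 0⟩ : Oct F) * pow X k := by
  obtain ⟨n, rfl⟩ : ∃ n, k = n + 1 := ⟨k - 1, (Nat.succ_pred_eq_of_pos hk).symm⟩
  by_cases hα : α = 0
  · subst hα
    refine ⟨⟨0, α₁⁻¹ • b, 0, 1⟩, ?_⟩
    rw [Oct.powB, Oct.mul_def]
    simp [Oct.dot_zero_right, Oct.dot_zero_left, Oct.cross_zero_right,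
      Oct.cross_zero_left, smul_smul, mul_inv_cancel₀ hα₁]
  · obtain ⟨l, hl⟩ := IsAlgClosed.exists_pow_nat_eq (α / α₁) (n := n + 1) (Nat.succ_pos n)
    have hl0 : l ≠ 0 := by
      intro h
      rw [h] at hl
      simp at hl
      exact hα (by field_simp at hl; grind)
    refine ⟨⟨l, (α₁ * l ^ n)⁻¹ • b, 0, 0⟩, ?_⟩
    rw [Oct.powA, Oct.mul_def]
    simp only [Oct.dot_zero_right, Oct.dot_zero_left, Oct.cross_zero_right,
      Oct.cross_zero_left, smul_smul]
    refine Oct.mk.injEq .. ▸ ⟨?_, ?_, by simp, by simp [Oct.dot_zero_left]⟩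
    · rw [hl]; field_simp; simp
    · have h1 : α₁ * (l ^ n * (α₁ * l ^ n)⁻¹) = 1 := by
        rw [mul_inv]
        field_simp
      funext i
      simp only [Pi.add_apply, Pi.smul_apply, Pi.zero_apply, smul_eq_mul, add_zero]
      rw [mul_zero, add_zero, h1, one_mul]
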